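/- Let n ∈ [1,3) and α = 4/(n+3), and suppose that for every D ≥ 0 the pair (B_D, H_D) is a solution of the self-similar problem (ss-new) with parameter D. Then D · B_D^α → 3 as D → +∞, and H_D converges uniformly on [0,1] to the parabolic profile x ↦ (3/2)(1 − x²) as D → +∞. -/

import Mathlib

/-- First derivative within `[0,1)`. -/
noncomputable def dIco (f : ℝ → ℝ) : ℝ → ℝ := derivWithin f (Set.Ico 0 1)

/-- Third derivative within `[0,1)`. -/
noncomputable def d3Ico (f : ℝ → ℝ) : ℝ → ℝ := dIco (dIco (dIco f))

/-- `(B, H)` is a solution of the self-similar problem (ss-new) with mobility exponent `n`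
and contact-line friction coefficient `D` (here `α = 4/(n+3)`). -/
def IsSSNew (n D B : ℝ) (H : ℝ → ℝ) : Prop :=
  0 < B ∧
  ContinuousOn H (Set.Icc 0 1) ∧
  (∀ x ∈ Set.Ico (0:ℝ) 1, 0 < H x) ∧
  ContDiffOn ℝ 3 H (Set.Ico 0 1) ∧
  (∀ x ∈ Set.Ioo (0:ℝ) 1, H x ^ (n - 1) * d3Ico H x = B ^ 2 * x) ∧
  dIco H 0 = 0 ∧
  H 1 = 0 ∧
  Filter.Tendsto (fun x => (dIco H x) ^ 2) (nhdsWithin 1 (Set.Iio 1))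
    (nhds (D ^ 2 * B ^ (2 * (4 / (n + 3))))) ∧
  (∫ x in (0:ℝ)..1, H x) = 1

open Set Filter MeasureTheory intervalIntegral

lemma ssnew_key {n D b : ℝ} (hn1 : 1 ≤ n) (hn3 : n < 3) (hD : 0 < D)
    {h : ℝ → ℝ} (hs : IsSSNew n D b h) :
    0 < D * b ^ (4 / (n + 3)) ∧ D * b ^ (4 / (n + 3)) ≤ 3 ∧
    1 ≤ D * b ^ (4 / (n + 3)) / 3 +
      b ^ 2 * (D * b ^ (4 / (n + 3)) / 2) ^ (1 - n) / (3 - n) ∧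
    0 < b ∧
    ∀ x ∈ Set.Icc (0:ℝ) 1,
      |h x - D * b ^ (4 / (n + 3)) * (1 - x ^ 2) / 2| ≤
        2 * (b ^ 2 * (D * b ^ (4 / (n + 3)) / 2) ^ (1 - n) / (3 - n)) := by
  obtain ⟨hb, hcont, hpos, hC3, hode, h10, h1v, hlim, hint⟩ := hs
  set h1 : ℝ → ℝ := dIco h with hh1
  set h2 : ℝ → ℝ := dIco h1 with hh2
  set h3 : ℝ → ℝ := dIco h2 with hh3
  set s : Set ℝ := Set.Ico 0 1 with hsdef
  have hode3 : ∀ x ∈ Ioo (0:ℝ) 1, h x ^ (n - 1) * h3 x = b ^ 2 * x := by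
    simpa only [d3Ico, ← hh1, ← hh2, ← hh3] using hode
  have uds : UniqueDiffOn ℝ s := uniqueDiffOn_Ico 0 1
  have hC2 : ContDiffOn ℝ 2 h1 s := hC3.derivWithin uds (by norm_num)
  have hC1 : ContDiffOn ℝ 1 h2 s := hC2.derivWithin uds (by norm_num)
  have h1c : ContinuousOn h1 s := hC2.continuousOn
  have h2c : ContinuousOn h2 s := hC1.continuousOn
  have h3c : ContinuousOn h3 s := by
    have : ContDiffOn ℝ 0 h3 s := hC1.derivWithin uds (by norm_num)
    exact this.continuousOn
  have hmem : ∀ x : ℝ, x ∈ Ioo (0:ℝ) 1 → s ∈ nhds x := fun x hx => Ico_mem_nhds hx.1 hx.2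
  have hIoos : Ioo (0:ℝ) 1 ⊆ s := Ioo_subset_Ico_self
  have hder1 : ∀ x ∈ Ioo (0:ℝ) 1, HasDerivAt h (h1 x) x := fun x hx =>
    ((hC3.differentiableOn (by norm_num) x ⟨hx.1.le, hx.2⟩).hasDerivWithinAt).hasDerivAt (hmem x hx)
  have hder2 : ∀ x ∈ Ioo (0:ℝ) 1, HasDerivAt h1 (h2 x) x := fun x hx =>
    ((hC2.differentiableOn (by norm_num) x ⟨hx.1.le, hx.2⟩).hasDerivWithinAt).hasDerivAt (hmem x hx)
  have hder3 : ∀ x ∈ Ioo (0:ℝ) 1, HasDerivAt h2 (h3 x) x := fun x hx =>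
    ((hC1.differentiableOn (by norm_num) x ⟨hx.1.le, hx.2⟩).hasDerivWithinAt).hasDerivAt (hmem x hx)
  have h3pos : ∀ x ∈ Ioo (0:ℝ) 1, 0 < h3 x := by
    intro x hx
    have hhx : (0:ℝ) < h x ^ (n - 1) := Real.rpow_pos_of_pos (hpos x (hIoos hx)) _
    have h3eq : h3 x = b ^ 2 * x / h x ^ (n - 1) := by
      rw [eq_div_iff hhx.ne']
      linear_combination (hode3 x hx)
    rw [h3eq]
    exact div_pos (mul_pos (pow_pos hb 2) hx.1) hhx
  -- FTC helper
  have ftc : ∀ (f f' : ℝ → ℝ) (x y : ℝ), 0 ≤ x → x ≤ y → y < 1 →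
      ContinuousOn f (Icc x y) → (∀ t ∈ Ioo x y, HasDerivAt f (f' t) t) →
      ContinuousOn f' (Icc x y) →
      ∫ t in x..y, f' t = f y - f x := by
    intro f f' x y hx hxy hy hfc hff hf'c
    exact integral_eq_sub_of_hasDeriv_right_of_le hxy hfc
      (fun t ht => (hff t ht).hasDerivWithinAt)
      (hf'c.intervalIntegrable_of_Icc hxy)
  have hsubs : ∀ x y : ℝ, 0 ≤ x → y < 1 → Icc x y ⊆ s := by
    intro x y hx hy t ht
    exact ⟨hx.trans ht.1, lt_of_le_of_lt ht.2 hy⟩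
  have hsubIoo : ∀ x y : ℝ, 0 ≤ x → y < 1 → Ioo x y ⊆ Ioo 0 1 := by
    intro x y hx hy t ht
    exact ⟨lt_of_le_of_lt hx ht.1, ht.2.trans hy⟩
  -- Taylor identity (forward)
  have taylR : ∀ x y : ℝ, 0 ≤ x → x ≤ y → y < 1 →
      ∫ t in x..y, (y - t) * h3 t = h1 y - h1 x - (y - x) * h2 x := by
    intro x y hx hxy hy
    have hsub := hsubs x y hx hy
    have := ftc (fun t => h1 t + (y - t) * h2 t) (fun t => (y - t) * h3 t) x y hx hxy hy
      ((h1c.mono hsub).add (((continuous_const.sub continuous_id).continuousOn).mul (h2c.mono hsub)))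
      (fun t ht => by
        have ht' : t ∈ Ioo (0:ℝ) 1 := hsubIoo x y hx hy ht
        have := ((hder2 t ht').add (((hasDerivAt_id t).const_sub y).mul (hder3 t ht')) :
          HasDerivAt (fun t => h1 t + (y - t) * h2 t) _ t)
        exact this.congr_deriv (by simp only [id_eq]; ring))
      (((continuous_const.sub continuous_id).continuousOn).mul (h3c.mono hsub))
    rw [this]; ring
  -- Taylor identity (from 0)
  have taylS : ∀ x : ℝ, x ∈ s → h1 x = x * h2 x - ∫ t in (0:ℝ)..x, t * h3 t := by
    intro x hx
    have hsub := hsubs 0 x le_rfl hx.2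
    have key := ftc (fun t => h1 t - t * h2 t) (fun t => -(t * h3 t)) 0 x le_rfl hx.1 hx.2
      ((h1c.mono hsub).sub ((continuous_id.continuousOn).mul (h2c.mono hsub)))
      (fun t ht => by
        have ht' : t ∈ Ioo (0:ℝ) 1 := hsubIoo 0 x le_rfl hx.2 ht
        have := ((hder2 t ht').sub ((hasDerivAt_id t).mul (hder3 t ht')) :
          HasDerivAt (fun t => h1 t - t * h2 t) _ t)
        exact this.congr_deriv (by simp only [id_eq]; ring))
      ((continuous_id.continuousOn.mul (h3c.mono hsub)).neg)
    rw [intervalIntegral.integral_neg] at key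
    have h100 : h1 0 = 0 := h10
    have : -(∫ t in (0:ℝ)..x, t * h3 t) = (h1 x - x * h2 x) - (h1 0 - 0 * h2 0) := key
    rw [h100] at this
    linarith [this]
  clear_value h1 h2 h3
  -- E and its positivity
  set E : ℝ := D * b ^ (4 / (n + 3)) with hEd
  have hE : 0 < E := mul_pos hD (Real.rpow_pos_of_pos hb _)
  set K : ℝ := b ^ 2 * (E / 2) ^ (1 - n) / (3 - n) with hKd
  have hKnn : 0 ≤ K := by
    rw [hKd]
    apply div_nonneg _ (by linarith)
    positivity
  clear_value E K
  -- the squared limit, rewritten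
  have hE2 : D ^ 2 * b ^ (2 * (4 / (n + 3))) = E ^ 2 := by
    have : b ^ (2 * (4 / (n + 3))) = (b ^ (4 / (n + 3))) ^ (2:ℕ) := by
      rw [mul_comm, Real.rpow_mul hb.le, Real.rpow_two]
    rw [this, hEd, mul_pow]
  have hlim' : Tendsto (fun x => (h1 x) ^ 2) (nhdsWithin 1 (Iio 1)) (nhds (E ^ 2)) := by
    rw [← hE2]; exact hlim
  -- limit of h1 at 1⁻ is -E
  have limE : Tendsto h1 (nhdsWithin (1:ℝ) (Iio 1)) (nhds (-E)) := by
    have hev : ∀ᶠ y in nhdsWithin (1:ℝ) (Iio 1), E ^ 2 / 2 < (h1 y) ^ 2 :=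
      hlim'.eventually (eventually_gt_nhds (by nlinarith))
    obtain ⟨c, hc1, hcsub⟩ := mem_nhdsLT_iff_exists_Ioo_subset.1 hev
    set c' : ℝ := max c 0 with hc'd
    have hc'1 : c' < 1 := max_lt hc1 one_pos
    have hc'0 : 0 ≤ c' := le_max_right c 0
    have hIoo : ∀ y ∈ Ioo c' 1, E ^ 2 / 2 < (h1 y) ^ 2 := by
      intro y hy
      exact hcsub ⟨lt_of_le_of_lt (le_max_left c 0) hy.1, hy.2⟩
    have hneg : ∀ y ∈ Ioo c' 1, ∃ z ∈ Ioo y 1, h1 z < 0 := by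
      intro y hy
      have hy0 : 0 < y := lt_of_le_of_lt hc'0 hy.1
      obtain ⟨z, hz, hz'⟩ := exists_hasDerivAt_eq_slope h h1 hy.2
        (hcont.mono (Icc_subset_Icc hy0.le le_rfl))
        (fun t ht => hder1 t ⟨hy0.trans ht.1, ht.2⟩)
      refine ⟨z, hz, ?_⟩
      rw [hz', h1v]
      apply div_neg_of_neg_of_pos
      · have := hpos y ⟨hy0.le, hy.2⟩; linarith
      · linarith [hy.2]
    have hsign : ∀ y ∈ Ioo c' 1, h1 y < 0 := by
      intro y hy
      by_contra hcon
      push_neg at hcon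
      obtain ⟨z, hz, hzneg⟩ := hneg y hy
      have hcc : ContinuousOn h1 (Icc y z) := h1c.mono (by
        intro t ht
        exact ⟨(lt_of_le_of_lt hc'0 hy.1).le.trans ht.1, lt_of_le_of_lt ht.2 hz.2⟩)
      have him := intermediate_value_Icc' hz.1.le hcc
      have h0mem : (0:ℝ) ∈ Icc (h1 z) (h1 y) := ⟨hzneg.le, hcon⟩
      obtain ⟨w, hw, hw0⟩ := him h0mem
      have hwmem : w ∈ Ioo c' 1 := ⟨lt_of_lt_of_le hy.1 hw.1, lt_of_le_of_lt hw.2 hz.2⟩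
      have := hIoo w hwmem
      rw [hw0] at this
      nlinarith
    have hEq : ∀ᶠ y in nhdsWithin (1:ℝ) (Iio 1),
        -Real.sqrt ((h1 y) ^ 2) = h1 y := by
      filter_upwards [Ioo_mem_nhdsLT_of_mem (show (1:ℝ) ∈ Ioc c' 1 from ⟨hc'1, le_rfl⟩)] with y hy
      rw [Real.sqrt_sq_eq_abs, abs_of_neg (hsign y hy), neg_neg]
    have hten : Tendsto (fun y => -Real.sqrt ((h1 y) ^ 2)) (nhdsWithin (1:ℝ) (Iio 1)) (nhds (-E)) := by
      have hc := (Real.continuous_sqrt.tendsto (E ^ 2)).comp hlim'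
      have : Real.sqrt (E ^ 2) = E := by
        rw [Real.sqrt_sq hE.le]
      rw [this] at hc
      exact hc.neg
    exact Tendsto.congr' hEq hten
  -- nonnegativity of h3 up to 0
  have nb0 : (nhdsWithin (0:ℝ) (Ioo (0:ℝ) 1)).NeBot := by
    rw [← mem_closure_iff_nhdsWithin_neBot, closure_Ioo (by norm_num : (0:ℝ) ≠ 1)]
    exact ⟨le_rfl, zero_le_one⟩
  have h3tend0 : Tendsto h3 (nhdsWithin (0:ℝ) (Ioo (0:ℝ) 1)) (nhds (h3 0)) := by
    have := h3c.continuousWithinAt (left_mem_Ico.2 one_pos)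
    exact this.mono_left (nhdsWithin_mono 0 hIoos)
  have h3nn : ∀ t ∈ s, 0 ≤ h3 t := by
    intro t ht
    rcases eq_or_lt_of_le ht.1 with h0 | h0
    · rw [← h0]
      refine ge_of_tendsto h3tend0 ?_
      filter_upwards [self_mem_nhdsWithin] with u hu
      exact (h3pos u hu).le
    · exact (h3pos t ⟨h0, ht.2⟩).le
  -- R and S
  set R : ℝ → ℝ := fun x => -E - h1 x - (1 - x) * h2 x with hRd
  set S : ℝ → ℝ := fun x => ∫ t in (0:ℝ)..x, t * h3 t with hSd
  have Rtend : ∀ x ∈ s, Tendsto (fun y => ∫ t in x..y, (y - t) * h3 t)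
      (nhdsWithin (1:ℝ) (Iio 1)) (nhds (R x)) := by
    intro x hx
    have base : Tendsto (fun y => h1 y - h1 x - (y - x) * h2 x)
        (nhdsWithin (1:ℝ) (Iio 1)) (nhds (R x)) := by
      have t2 : Tendsto (fun y : ℝ => (y - x) * h2 x) (nhdsWithin (1:ℝ) (Iio 1))
          (nhds ((1 - x) * h2 x)) := by
        have hcn : Continuous (fun y : ℝ => (y - x) * h2 x) :=
          (continuous_id.sub continuous_const).mul continuous_const
        exact (hcn.tendsto 1).mono_left (nhdsWithin_le_nhds (a := (1:ℝ)) (s := Iio 1))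
      have hfin : Tendsto (fun y => h1 y - h1 x - (y - x) * h2 x)
          (nhdsWithin (1:ℝ) (Iio 1)) (nhds (-E - h1 x - (1 - x) * h2 x)) :=
        (limE.sub tendsto_const_nhds).sub t2
      have : -E - h1 x - (1 - x) * h2 x = R x := by rw [hRd]
      rw [← this]
      exact hfin
    apply Tendsto.congr' _ base
    filter_upwards [Ioo_mem_nhdsLT_of_mem (show (1:ℝ) ∈ Ioc x 1 from ⟨hx.2, le_rfl⟩)] with y hy
    exact (taylR x y hx.1 hy.1.le hy.2).symm
  have Rnn : ∀ x ∈ s, 0 ≤ R x := by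
    intro x hx
    refine ge_of_tendsto (Rtend x hx) ?_
    filter_upwards [Ioo_mem_nhdsLT_of_mem (show (1:ℝ) ∈ Ioc x 1 from ⟨hx.2, le_rfl⟩)] with y hy
    apply intervalIntegral.integral_nonneg hy.1.le
    intro t ht
    have hts : t ∈ s := hsubs x y hx.1 hy.2 ht
    exact mul_nonneg (by linarith [ht.2]) (h3nn t hts)
  have Snn : ∀ x ∈ s, 0 ≤ S x := by
    intro x hx
    apply intervalIntegral.integral_nonneg hx.1
    intro t ht
    have hts : t ∈ s := hsubs 0 x le_rfl hx.2 ht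
    exact mul_nonneg ht.1 (h3nn t hts)
  have phi_eq : ∀ x ∈ s, h1 x + E * x = -(x * R x) - (1 - x) * S x := by
    intro x hx
    have hSx : S x = ∫ t in (0:ℝ)..x, t * h3 t := by simp only [hSd]
    have e1 : x * h2 x = h1 x + S x := by
      have := taylS x hx
      rw [hSx]
      linarith
    have hRx : R x = -E - h1 x - (1 - x) * h2 x := by simp only [hRd]
    have e2 : (1 - x) * h2 x = -E - h1 x - R x := by
      rw [hRx]; ring
    have key : (1 - x) * (x * h2 x) = x * ((1 - x) * h2 x) := by ring
    rw [e1, e2] at key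
    linear_combination key
  have chord : ∀ x ∈ s, h1 x ≤ -E * x := by
    intro x hx
    have := phi_eq x hx
    have r1 : 0 ≤ x * R x := mul_nonneg hx.1 (Rnn x hx)
    have r2 : 0 ≤ (1 - x) * S x := mul_nonneg (by linarith [hx.2]) (Snn x hx)
    linarith
  -- tendsto of h at 1⁻ to 0
  have hIccmem : Icc (0:ℝ) 1 ∈ nhdsWithin (1:ℝ) (Iio 1) :=
    mem_nhdsWithin.2 ⟨Ioi 0, isOpen_Ioi, mem_Ioi.2 one_pos, fun t ht => ⟨le_of_lt ht.1, le_of_lt ht.2⟩⟩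
  have htend0 : Tendsto h (nhdsWithin (1:ℝ) (Iio 1)) (nhds 0) := by
    have ht : Tendsto h (nhdsWithin (1:ℝ) (Icc 0 1)) (nhds (h 1)) :=
      hcont.continuousWithinAt (right_mem_Icc.2 zero_le_one)
    rw [h1v] at ht
    exact ht.mono_left (nhdsWithin_le_of_mem hIccmem)
  -- lower bound for h
  have hlow : ∀ x ∈ Icc (0:ℝ) 1, E * (1 - x ^ 2) / 2 ≤ h x := by
    intro x hx
    rcases eq_or_lt_of_le hx.2 with hx1 | hx1
    · rw [hx1, h1v]; norm_num
    · have hxs : x ∈ s := ⟨hx.1, hx1⟩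
      have claim : ∀ y ∈ Ioo x 1, h y - h x ≤ -E * ((y ^ 2 - x ^ 2) / 2) := by
        intro y hy
        have hsub := hsubs x y hx.1 hy.2
        have hInt : ∫ t in x..y, h1 t = h y - h x :=
          ftc h h1 x y hx.1 hy.1.le hy.2 (hcont.mono (hsub.trans Ico_subset_Icc_self))
            (fun t ht => hder1 t (hsubIoo x y hx.1 hy.2 ht)) (h1c.mono hsub)
        have hmono : ∫ t in x..y, h1 t ≤ ∫ t in x..y, -E * t := by
          apply intervalIntegral.integral_mono_on hy.1.le
            ((h1c.mono hsub).intervalIntegrable_of_Icc hy.1.le)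
            (Continuous.intervalIntegrable (by fun_prop) x y)
          intro t ht
          exact chord t (hsub ht)
        have hval : ∫ t in x..y, -E * t = -E * ((y ^ 2 - x ^ 2) / 2) := by
          rw [intervalIntegral.integral_const_mul, integral_id]
        linarith
      have t1 : Tendsto (fun y => h y - h x) (nhdsWithin (1:ℝ) (Iio 1)) (nhds (0 - h x)) :=
        htend0.sub tendsto_const_nhds
      have t2 : Tendsto (fun y : ℝ => -E * ((y ^ 2 - x ^ 2) / 2)) (nhdsWithin (1:ℝ) (Iio 1))
          (nhds (-E * ((1 - x ^ 2) / 2))) := by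
        have hcn : Continuous (fun y : ℝ => -E * ((y ^ 2 - x ^ 2) / 2)) := by fun_prop
        have heq : -E * ((1 - x ^ 2) / 2) = -E * (((1:ℝ) ^ 2 - x ^ 2) / 2) := by norm_num
        rw [heq]
        exact (hcn.tendsto 1).mono_left (nhdsWithin_le_nhds (a := (1:ℝ)) (s := Iio 1))
      have := le_of_tendsto_of_tendsto t1 t2 ?_
      · linarith
      · filter_upwards [Ioo_mem_nhdsLT_of_mem (show (1:ℝ) ∈ Ioc x 1 from ⟨hx1, le_rfl⟩)] with y hy
        exact claim y hy
  -- pointwise bound for (1-t) h3 t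
  set g : ℝ → ℝ := fun t => b ^ 2 * (E / 2) ^ (1 - n) * (1 - t) ^ (2 - n) with hgd
  clear_value g
  have keyIoo : ∀ t ∈ Ioo (0:ℝ) 1, (1 - t) * h3 t ≤ g t := by
    intro t ht
    obtain ⟨ht0, ht1⟩ := ht
    have ht : t ∈ Ioo (0:ℝ) 1 := ⟨ht0, ht1⟩
    have htpos : 0 < h t := hpos t (hIoos ht)
    have h1t : (0:ℝ) < 1 - t := by linarith
    have h1t' : (0:ℝ) < 1 + t := by linarith
    have hLpos : 0 < E * (1 - t ^ 2) / 2 := by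
      have := mul_pos hE (mul_pos h1t h1t')
      nlinarith only [this]
    have hhL : E * (1 - t ^ 2) / 2 ≤ h t := hlow t ⟨ht0.le, ht1.le⟩
    have hrp : (E * (1 - t ^ 2) / 2) ^ (n - 1) ≤ h t ^ (n - 1) :=
      Real.rpow_le_rpow hLpos.le hhL (by linarith)
    have hgnn : 0 ≤ g t := by
      rw [hgd]
      have : (0:ℝ) ≤ (1 - t) ^ (2 - n) := Real.rpow_nonneg h1t.le _
      positivity
    have eE : (E / 2) ^ (1 - n) * (E / 2) ^ (n - 1) = 1 := by
      rw [← Real.rpow_add (by positivity)]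
      norm_num
    have et : ((1 - t)) ^ (2 - n) * (1 - t) ^ (n - 1) = 1 - t := by
      rw [← Real.rpow_add h1t]
      have : (2 - n) + (n - 1) = (1:ℝ) := by ring
      rw [this, Real.rpow_one]
    have step : g t * (E * (1 - t ^ 2) / 2) ^ (n - 1) = b ^ 2 * (1 - t) * (1 + t) ^ (n - 1) := by
      have e1 : E * (1 - t ^ 2) / 2 = (E / 2) * ((1 - t) * (1 + t)) := by ring
      rw [e1, Real.mul_rpow (by positivity) (by positivity),
        Real.mul_rpow h1t.le h1t'.le, hgd]
      calc b ^ 2 * (E / 2) ^ (1 - n) * (1 - t) ^ (2 - n) *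
            ((E / 2) ^ (n - 1) * ((1 - t) ^ (n - 1) * (1 + t) ^ (n - 1)))
          = ((E / 2) ^ (1 - n) * (E / 2) ^ (n - 1)) * (((1 - t)) ^ (2 - n) * (1 - t) ^ (n - 1)) *
            (b ^ 2 * (1 + t) ^ (n - 1)) := by ring
        _ = b ^ 2 * (1 - t) * (1 + t) ^ (n - 1) := by rw [eE, et]; ring
    have hone : (1:ℝ) ≤ (1 + t) ^ (n - 1) := by
      have h2' := Real.rpow_le_rpow zero_le_one (by linarith : (1:ℝ) ≤ 1 + t) (by linarith : (0:ℝ) ≤ n - 1)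
      rwa [Real.one_rpow] at h2'
    have main : b ^ 2 * t * (1 - t) ≤ g t * h t ^ (n - 1) := by
      have c3 : g t * (E * (1 - t ^ 2) / 2) ^ (n - 1) ≤ g t * h t ^ (n - 1) :=
        mul_le_mul_of_nonneg_left hrp hgnn
      rw [step] at c3
      have hXnn : (0:ℝ) ≤ b ^ 2 * (1 - t) :=
        mul_nonneg (pow_nonneg hb.le 2) h1t.le
      have d1 : b ^ 2 * t * (1 - t) ≤ b ^ 2 * (1 - t) := by
        nlinarith only [mul_nonneg hXnn h1t.le]
      have d2 : b ^ 2 * (1 - t) ≤ b ^ 2 * (1 - t) * (1 + t) ^ (n - 1) := by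
        have hP : (0:ℝ) ≤ (1 + t) ^ (n - 1) - 1 := by linarith only [hone]
        nlinarith only [mul_nonneg hXnn hP]
      linarith only [c3, d1, d2]
    have hpow : 0 < h t ^ (n - 1) := Real.rpow_pos_of_pos htpos _
    have h3eq : h3 t = b ^ 2 * t / h t ^ (n - 1) := by
      rw [eq_div_iff hpow.ne']
      linear_combination hode3 t ht
    rw [h3eq, show (1 - t) * (b ^ 2 * t / h t ^ (n - 1)) = b ^ 2 * t * (1 - t) / h t ^ (n - 1) by ring]
    exact (div_le_iff₀ hpow).2 main
  have keyIco : ∀ t ∈ s, (1 - t) * h3 t ≤ g t := by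
    intro t ht
    rcases eq_or_lt_of_le ht.1 with h0 | h0
    · rw [← h0]
      have tL : Tendsto (fun u => (1 - u) * h3 u) (nhdsWithin (0:ℝ) (Ioo (0:ℝ) 1))
          (nhds ((1 - 0) * h3 0)) := by
        apply Tendsto.mul _ h3tend0
        exact ((continuous_const.sub continuous_id).tendsto 0).mono_left nhdsWithin_le_nhds
      have tR : Tendsto g (nhdsWithin (0:ℝ) (Ioo (0:ℝ) 1)) (nhds (g 0)) := by
        have hca : ContinuousAt (fun u : ℝ => (1 - u) ^ (2 - n)) 0 := by
          apply ContinuousAt.rpow_const (by fun_prop)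
          left; norm_num
        have : ContinuousAt g 0 := by
          rw [hgd]
          exact (continuousAt_const.mul hca)
        exact this.continuousWithinAt
      have := le_of_tendsto_of_tendsto tL tR ?_
      · simpa using this
      · filter_upwards [self_mem_nhdsWithin] with u hu
        exact keyIoo u hu
    · exact keyIoo t ⟨h0, ht.2⟩
  -- g is integrable with integral K
  have grInt : IntervalIntegrable (fun u : ℝ => (1 - u) ^ (2 - n)) volume 0 1 := by
    have h0 := (intervalIntegral.intervalIntegrable_rpow' (by linarith : (-1:ℝ) < 2 - n)
      (a := 0) (b := 1)).comp_sub_left 1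
    norm_num at h0
    exact h0.symm
  have gInt : IntervalIntegrable g volume 0 1 := by
    have h0 := grInt.const_mul (b ^ 2 * (E / 2) ^ (1 - n))
    rw [hgd]
    exact h0
  have grVal : ∫ u in (0:ℝ)..1, (1 - u) ^ (2 - n) = 1 / (3 - n) := by
    have := intervalIntegral.integral_comp_sub_left (a := 0) (b := 1) (fun u : ℝ => u ^ (2 - n)) 1
    norm_num at this
    rw [this, integral_rpow (Or.inl (by linarith))]
    rw [Real.one_rpow, Real.zero_rpow (by intro hc; linarith [hc] : (2 - n + 1) ≠ 0)]
    ring_nf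
  have gval : ∫ t in (0:ℝ)..1, g t = K := by
    rw [hgd]
    rw [intervalIntegral.integral_const_mul, grVal, hKd]
    ring
  have gIntK : ∀ x y : ℝ, 0 ≤ x → x ≤ y → y ≤ 1 → ∫ t in x..y, g t ≤ K := by
    intro x y hx hxy hy
    rw [← gval]
    apply intervalIntegral.integral_mono_interval hx hxy hy _ gInt
    have hae : ∀ᵐ t ∂(volume.restrict (Ioc (0:ℝ) 1)), t ∈ Ioc (0:ℝ) 1 :=
      ae_restrict_mem measurableSet_Ioc
    filter_upwards [hae] with t ht
    rw [hgd]
    have : (0:ℝ) ≤ (1 - t) ^ (2 - n) := Real.rpow_nonneg (by linarith [ht.2]) _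
    positivity
  -- R x ≤ K and (1-x) S x ≤ K
  have gint' : ∀ x y : ℝ, 0 ≤ x → x ≤ y → y < 1 → IntervalIntegrable g volume x y := by
    intro x y hx hxy hy
    apply gInt.mono_set
    rw [uIcc_of_le hxy, uIcc_of_le zero_le_one]
    exact Icc_subset_Icc hx hy.le
  have RK : ∀ x ∈ s, R x ≤ K := by
    intro x hx
    refine le_of_tendsto (Rtend x hx) ?_
    filter_upwards [Ioo_mem_nhdsLT_of_mem (show (1:ℝ) ∈ Ioc x 1 from ⟨hx.2, le_rfl⟩)] with y hy
    have hsub := hsubs x y hx.1 hy.2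
    have step1 : ∫ t in x..y, (y - t) * h3 t ≤ ∫ t in x..y, g t := by
      apply intervalIntegral.integral_mono_on hy.1.le
        ((((continuous_const.sub continuous_id).continuousOn).mul (h3c.mono hsub)).intervalIntegrable_of_Icc hy.1.le)
        (gint' x y hx.1 hy.1.le hy.2)
      intro t ht
      have hts : t ∈ s := hsub ht
      calc (y - t) * h3 t ≤ (1 - t) * h3 t := by
            apply mul_le_mul_of_nonneg_right _ (h3nn t hts)
            linarith [hy.2]
        _ ≤ g t := keyIco t hts
    exact step1.trans (gIntK x y hx.1 hy.1.le hy.2.le)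
  have SK : ∀ x ∈ s, (1 - x) * S x ≤ K := by
    intro x hx
    have hsub := hsubs 0 x le_rfl hx.2
    have e : (1 - x) * S x = ∫ t in (0:ℝ)..x, (1 - x) * (t * h3 t) := by
      rw [hSd, intervalIntegral.integral_const_mul]
    rw [e]
    have step1 : ∫ t in (0:ℝ)..x, (1 - x) * (t * h3 t) ≤ ∫ t in (0:ℝ)..x, g t := by
      apply intervalIntegral.integral_mono_on hx.1
        ((continuousOn_const.mul (continuousOn_id.mul (h3c.mono hsub))).intervalIntegrable_of_Icc hx.1)
        (gint' 0 x le_rfl hx.1 hx.2)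
      · intro t ht
        have hts : t ∈ s := hsub ht
        have hcomp : (1 - x) * t ≤ (1 - t) := by nlinarith [ht.1, ht.2, hx.2]
        calc (1 - x) * (t * h3 t) = ((1 - x) * t) * h3 t := by ring
          _ ≤ (1 - t) * h3 t := mul_le_mul_of_nonneg_right hcomp (h3nn t hts)
          _ ≤ g t := keyIco t hts
    exact step1.trans (gIntK 0 x le_rfl hx.1 hx.2.le)
  -- phi lower bound
  have phi_bounds : ∀ x ∈ s, -E * x - 2 * K ≤ h1 x := by
    intro x hx
    have := phi_eq x hx
    have r1 : x * R x ≤ K := by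
      have := RK x hx
      have hr := Rnn x hx
      nlinarith [hx.1, hx.2, hKnn]
    have r2 : (1 - x) * S x ≤ K := SK x hx
    linarith
  -- upper bound for h
  have hup : ∀ x ∈ Icc (0:ℝ) 1, h x ≤ E * (1 - x ^ 2) / 2 + 2 * K * (1 - x) := by
    intro x hx
    rcases eq_or_lt_of_le hx.2 with hx1 | hx1
    · rw [hx1, h1v]; norm_num
    · have hxs : x ∈ s := ⟨hx.1, hx1⟩
      have claim : ∀ y ∈ Ioo x 1, -E * ((y ^ 2 - x ^ 2) / 2) - 2 * K * (y - x) ≤ h y - h x := by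
        intro y hy
        have hsub := hsubs x y hx.1 hy.2
        have hInt : ∫ t in x..y, h1 t = h y - h x :=
          ftc h h1 x y hx.1 hy.1.le hy.2 (hcont.mono (hsub.trans Ico_subset_Icc_self))
            (fun t ht => hder1 t (hsubIoo x y hx.1 hy.2 ht)) (h1c.mono hsub)
        have hmono : ∫ t in x..y, (-E * t - 2 * K) ≤ ∫ t in x..y, h1 t := by
          apply intervalIntegral.integral_mono_on hy.1.le
            (Continuous.intervalIntegrable (by fun_prop) x y)
            ((h1c.mono hsub).intervalIntegrable_of_Icc hy.1.le)
          intro t ht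
          exact phi_bounds t (hsub ht)
        have hval : ∫ t in x..y, (-E * t - 2 * K) =
            -E * ((y ^ 2 - x ^ 2) / 2) - 2 * K * (y - x) := by
          rw [intervalIntegral.integral_sub (Continuous.intervalIntegrable (by fun_prop) x y)
            intervalIntegrable_const]
          rw [intervalIntegral.integral_const_mul, integral_id, intervalIntegral.integral_const]
          simp only [smul_eq_mul]
          ring
        linarith
      have t1 : Tendsto (fun y => h y - h x) (nhdsWithin (1:ℝ) (Iio 1)) (nhds (0 - h x)) :=
        htend0.sub tendsto_const_nhds
      have t2 : Tendsto (fun y : ℝ => -E * ((y ^ 2 - x ^ 2) / 2) - 2 * K * (y - x))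
          (nhdsWithin (1:ℝ) (Iio 1)) (nhds (-E * ((1 - x ^ 2) / 2) - 2 * K * (1 - x))) := by
        have hcn : Continuous (fun y : ℝ => -E * ((y ^ 2 - x ^ 2) / 2) - 2 * K * (y - x)) := by
          fun_prop
        have heq : -E * ((1 - x ^ 2) / 2) - 2 * K * (1 - x)
            = -E * (((1:ℝ) ^ 2 - x ^ 2) / 2) - 2 * K * ((1:ℝ) - x) := by norm_num
        rw [heq]
        exact (hcn.tendsto 1).mono_left (nhdsWithin_le_nhds (a := (1:ℝ)) (s := Iio 1))
      have := le_of_tendsto_of_tendsto t2 t1 ?_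
      · linarith
      · filter_upwards [Ioo_mem_nhdsLT_of_mem (show (1:ℝ) ∈ Ioc x 1 from ⟨hx1, le_rfl⟩)] with y hy
        exact claim y hy
  -- integral comparisons
  have hInt1 : ∫ x in (0:ℝ)..1, E * (1 - x ^ 2) / 2 = E / 3 := by
    have : (fun x : ℝ => E * (1 - x ^ 2) / 2) = fun x : ℝ => E / 2 - E / 2 * x ^ 2 := by
      funext x; ring
    rw [this, intervalIntegral.integral_sub intervalIntegrable_const
      (Continuous.intervalIntegrable (by fun_prop) 0 1)]
    rw [intervalIntegral.integral_const, intervalIntegral.integral_const_mul, integral_pow]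
    norm_num
    ring
  have hInt2 : ∫ x in (0:ℝ)..1, (E * (1 - x ^ 2) / 2 + 2 * K * (1 - x)) = E / 3 + K := by
    rw [intervalIntegral.integral_add (Continuous.intervalIntegrable (by fun_prop) 0 1)
      (Continuous.intervalIntegrable (by fun_prop) 0 1)]
    rw [hInt1]
    have : (fun x : ℝ => 2 * K * (1 - x)) = fun x : ℝ => 2 * K - 2 * K * x := by
      funext x; ring
    rw [this, intervalIntegral.integral_sub intervalIntegrable_const
      (Continuous.intervalIntegrable (by fun_prop) 0 1)]
    rw [intervalIntegral.integral_const, intervalIntegral.integral_const_mul, integral_id]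
    norm_num
    ring
  have hintable : IntervalIntegrable h volume 0 1 :=
    hcont.intervalIntegrable_of_Icc zero_le_one
  have hElow : E / 3 ≤ 1 := by
    have := intervalIntegral.integral_mono_on zero_le_one
      (Continuous.intervalIntegrable (by fun_prop) 0 1) hintable hlow
    rw [hInt1, hint] at this
    exact this
  have hEup : 1 ≤ E / 3 + K := by
    have := intervalIntegral.integral_mono_on zero_le_one hintable
      (Continuous.intervalIntegrable (by fun_prop) 0 1) hup
    rw [hInt2, hint] at this
    exact this
  refine ⟨hE, by linarith, hEup, hb, ?_⟩
  intro x hx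
  have l1 := hlow x hx
  have l2 := hup x hx
  rw [abs_le]
  have hx0 : (0:ℝ) ≤ x := hx.1
  constructor
  · linarith only [l1, hKnn]
  · nlinarith only [l2, mul_nonneg hKnn hx0]

/-- If for every `D ≥ 0` the pair `(B_D, H_D)` solves (ss-new), then `D · B_D^α → 3` and
`H_D → (3/2)(1 - x²)` uniformly on `[0,1]` as `D → ∞` (with `α = 4/(n+3)`). -/
theorem ssnew_large_friction_limit (n : ℝ) (hn : n ∈ Set.Ico (1:ℝ) 3)
    (B : ℝ → ℝ) (H : ℝ → ℝ → ℝ)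
    (hsol : ∀ D : ℝ, 0 ≤ D → IsSSNew n D (B D) (H D)) :
    Filter.Tendsto (fun D => D * B D ^ (4 / (n + 3))) Filter.atTop (nhds 3) ∧
    TendstoUniformlyOn (fun D x => H D x) (fun x => 3 / 2 * (1 - x ^ 2))
      Filter.atTop (Set.Icc 0 1) := by
  obtain ⟨hn1, hn3⟩ := hn
  have hn30 : (0:ℝ) < 3 - n := by linarith
  have hn4 : (0:ℝ) < n + 3 := by linarith
  set β : ℝ := (n + 3) / 2 with hβd
  have hβ : 0 < β := by rw [hβd]; linarith
  set C : ℝ := 2 ^ (n - 1) * 3 ^ ((5 - n) / 2) / (3 - n) with hCd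
  have hC0 : 0 ≤ C := by
    rw [hCd]
    apply div_nonneg _ hn30.le
    positivity
  have key : ∀ D : ℝ, 1 ≤ D →
      0 < D * B D ^ (4 / (n + 3)) ∧ D * B D ^ (4 / (n + 3)) ≤ 3 ∧
      1 ≤ D * B D ^ (4 / (n + 3)) / 3 +
        B D ^ 2 * (D * B D ^ (4 / (n + 3)) / 2) ^ (1 - n) / (3 - n) ∧
      0 < B D ∧
      ∀ x ∈ Set.Icc (0:ℝ) 1,
        |H D x - D * B D ^ (4 / (n + 3)) * (1 - x ^ 2) / 2| ≤
          2 * (B D ^ 2 * (D * B D ^ (4 / (n + 3)) / 2) ^ (1 - n) / (3 - n)) :=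
    fun D hD => ssnew_key hn1 hn3 (by linarith) (hsol D (by linarith))
  have KC : ∀ D : ℝ, 1 ≤ D →
      B D ^ 2 * (D * B D ^ (4 / (n + 3)) / 2) ^ (1 - n) / (3 - n) ≤ C * D ^ (-β) := by
    intro D hD
    obtain ⟨hE, hE3, _, hb, _⟩ := key D hD
    have hD0 : (0:ℝ) < D := by linarith
    set E : ℝ := D * B D ^ (4 / (n + 3)) with hEd
    have hbα : B D ^ (4 / (n + 3)) = E / D := by
      rw [hEd, mul_comm, mul_div_assoc, div_self hD0.ne', mul_one]
    have hαβ : (4 / (n + 3)) * β = 2 := by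
      rw [hβd]; field_simp; norm_num
    have hb2 : (B D : ℝ) ^ 2 = (E / D) ^ β := by
      have h2' : (B D : ℝ) ^ 2 = B D ^ (2:ℝ) := by
        rw [← Real.rpow_natCast (B D) 2]; norm_num
      rw [h2', ← hαβ, Real.rpow_mul hb.le, hbα]
    have l1 : (E / D) ^ β = E ^ β * D ^ (-β) := by
      rw [Real.div_rpow hE.le hD0.le, Real.rpow_neg hD0.le, div_eq_mul_inv]
    have l2 : (E / 2) ^ (1 - n) = E ^ (1 - n) * 2 ^ (n - 1) := by
      rw [Real.div_rpow hE.le (by norm_num : (0:ℝ) ≤ 2),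
        show (n - 1 : ℝ) = -(1 - n) by ring, Real.rpow_neg (by norm_num : (0:ℝ) ≤ 2),
        div_eq_mul_inv]
    have l3 : E ^ β * E ^ (1 - n) = E ^ ((5 - n) / 2) := by
      rw [← Real.rpow_add hE]
      congr 1
      rw [hβd]; ring
    have l4 : E ^ ((5 - n) / 2) ≤ 3 ^ ((5 - n) / 2) :=
      Real.rpow_le_rpow hE.le hE3 (by linarith)
    have hDnn : (0:ℝ) ≤ D ^ (-β) := Real.rpow_nonneg hD0.le _
    have h2nn : (0:ℝ) ≤ (2:ℝ) ^ (n - 1) := Real.rpow_nonneg (by norm_num) _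
    have e5 : B D ^ 2 * (E / 2) ^ (1 - n) = 2 ^ (n - 1) * E ^ ((5 - n) / 2) * D ^ (-β) := by
      calc B D ^ 2 * (E / 2) ^ (1 - n)
          = (E ^ β * D ^ (-β)) * (E ^ (1 - n) * 2 ^ (n - 1)) := by rw [hb2, l1, l2]
        _ = (E ^ β * E ^ (1 - n)) * 2 ^ (n - 1) * D ^ (-β) := by ring
        _ = 2 ^ (n - 1) * E ^ ((5 - n) / 2) * D ^ (-β) := by rw [l3]; ring
    calc B D ^ 2 * (E / 2) ^ (1 - n) / (3 - n)
        = 2 ^ (n - 1) * E ^ ((5 - n) / 2) * D ^ (-β) / (3 - n) := by rw [e5]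
      _ ≤ 2 ^ (n - 1) * 3 ^ ((5 - n) / 2) * D ^ (-β) / (3 - n) := by
          exact div_le_div_of_nonneg_right
            (mul_le_mul_of_nonneg_right (mul_le_mul_of_nonneg_left l4 h2nn) hDnn) hn30.le
      _ = C * D ^ (-β) := by rw [hCd]; ring
  have hDlim : Filter.Tendsto (fun D : ℝ => C * D ^ (-β)) Filter.atTop (nhds 0) := by
    have := (tendsto_rpow_neg_atTop hβ).const_mul C
    simpa using this
  constructor
  · apply tendsto_of_tendsto_of_tendsto_of_le_of_le'
      (g := fun D : ℝ => 3 - 3 * (C * D ^ (-β))) (h := fun _ : ℝ => 3)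
    · have : Filter.Tendsto (fun D : ℝ => 3 - 3 * (C * D ^ (-β))) Filter.atTop
          (nhds (3 - 3 * 0)) := tendsto_const_nhds.sub (hDlim.const_mul 3)
      simpa using this
    · exact tendsto_const_nhds
    · filter_upwards [Filter.eventually_ge_atTop (1:ℝ)] with D hD
      obtain ⟨hE, hE3, hEK, hb, _⟩ := key D hD
      have hKC := KC D hD
      linarith
    · filter_upwards [Filter.eventually_ge_atTop (1:ℝ)] with D hD
      exact (key D hD).2.1
  · rw [Metric.tendstoUniformlyOn_iff]
    intro ε hε
    have hev : ∀ᶠ D : ℝ in Filter.atTop, 4 * (C * D ^ (-β)) < ε := by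
      have h4 : Filter.Tendsto (fun D : ℝ => 4 * (C * D ^ (-β))) Filter.atTop (nhds 0) := by
        simpa using hDlim.const_mul 4
      exact h4.eventually (eventually_lt_nhds hε)
    filter_upwards [hev, Filter.eventually_ge_atTop (1:ℝ)] with D hD4 hD1
    intro x hx
    obtain ⟨hE, hE3, hEK, hb, habs⟩ := key D hD1
    have hKC := KC D hD1
    set E : ℝ := D * B D ^ (4 / (n + 3)) with hEd
    set K : ℝ := B D ^ 2 * (E / 2) ^ (1 - n) / (3 - n) with hKd
    have hK0 : 0 ≤ K := by
      rw [hKd]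
      apply div_nonneg _ hn30.le
      have : (0:ℝ) ≤ (E / 2) ^ (1 - n) := Real.rpow_nonneg (by positivity) _
      positivity
    have hx2 : 0 ≤ 1 - x ^ 2 := by nlinarith only [hx.1, hx.2]
    have hx2' : 1 - x ^ 2 ≤ 1 := by nlinarith only [hx.1]
    have hb1 := habs x hx
    have keyE : |E - 3| ≤ 3 * K := by
      rw [abs_le]
      constructor
      · linarith
      · linarith
    have est : |3 / 2 * (1 - x ^ 2) - H D x| ≤ 2 * K + 3 * K * ((1 - x ^ 2) / 2) := by
      have tri := abs_add_le (E * (1 - x ^ 2) / 2 - H D x) ((3 - E) * ((1 - x ^ 2) / 2))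
      have e0 : 3 / 2 * (1 - x ^ 2) - H D x
          = (E * (1 - x ^ 2) / 2 - H D x) + (3 - E) * ((1 - x ^ 2) / 2) := by ring
      rw [e0]
      refine tri.trans (add_le_add ?_ ?_)
      · rw [abs_sub_comm]; exact hb1
      · rw [abs_mul]
        have hE' : |3 - E| ≤ 3 * K := by rw [abs_sub_comm]; exact keyE
        have h2 : |(1 - x ^ 2) / 2| = (1 - x ^ 2) / 2 := abs_of_nonneg (by linarith)
        rw [h2]
        exact mul_le_mul_of_nonneg_right hE' (by linarith)
    have hfin : 2 * K + 3 * K * ((1 - x ^ 2) / 2) ≤ 4 * (C * D ^ (-β)) := by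
      linarith only [hKC, hK0, mul_nonneg hK0 (sq_nonneg x)]
    calc dist ((fun x : ℝ => 3 / 2 * (1 - x ^ 2)) x) ((fun D x => H D x) D x)
        = |3 / 2 * (1 - x ^ 2) - H D x| := Real.dist_eq _ _
      _ ≤ 2 * K + 3 * K * ((1 - x ^ 2) / 2) := est
      _ ≤ 4 * (C * D ^ (-β)) := hfin
      _ < ε := hD4
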